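/- Let $\Delta$ be the simplicial complex on $\{x_1,\dots,x_n\}\cup\{y_1,\dots,y_m\}$ whose facets are $\bigcup_{k=1}^{s'}\mathcal{F}_k$ with $\mathcal{F}_k$ the family of subsets with exactly $q(k)$ $x$-vertices and $r(k)$ $y$-vertices, $q(1)<\dots<q(s')$, $r(1)>\dots>r(s')$, and set $\sigma(i)=q(i)+r(i)$. Suppose that for every $0\le l\le \dim\Delta+1$ the pure skeleton-complex $\Delta^{[l-1]}$ (generated by the faces of $\Delta$ of dimension exactly $l-1$) is strongly connected. Then for all $i\in\{1,\dots,s'-1\}$, either $q(i)=q(i+1)-1$ or $r(i)=r(i+1)+1$. -/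

import Mathlib

/-- Number of `x`-vertices of a subset of `{x_1,…,x_n} ∪ {y_1,…,y_m}`. -/
def xcard {n m : ℕ} (F : Finset (Fin n ⊕ Fin m)) : ℕ :=
  (F.filter fun v => v.isLeft).card

/-- Number of `y`-vertices of a subset of `{x_1,…,x_n} ∪ {y_1,…,y_m}`. -/
def ycard {n m : ℕ} (F : Finset (Fin n ⊕ Fin m)) : ℕ :=
  (F.filter fun v => v.isRight).card

/-- Faces of the complex `Δ` whose facets are the sets with exactly `q(k)`
`x`-vertices and `r(k)` `y`-vertices for some `k = 1,…,s'`. -/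
def IsFaceOf (n m s' : ℕ) (qv rv : ℕ → ℕ) (F : Finset (Fin n ⊕ Fin m)) : Prop :=
  ∃ k, 1 ≤ k ∧ k ≤ s' ∧ xcard F ≤ qv k ∧ ycard F ≤ rv k

/-- The facets of the pure skeleton complex `Δ^{[l-1]}`: the faces of `Δ` of
dimension exactly `l - 1`, i.e. of cardinality `l`. -/
def skelFacets (n m s' : ℕ) (qv rv : ℕ → ℕ) (l : ℕ) : Set (Finset (Fin n ⊕ Fin m)) :=
  {F | IsFaceOf n m s' qv rv F ∧ F.card = l}

/-- Strong connectedness of a pure set of facets (all of cardinality `l`):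
every two facets are joined by a chain of facets in which consecutive facets
meet in a set of cardinality `l - 1`. -/
def StronglyConnected {n m : ℕ} (Fac : Set (Finset (Fin n ⊕ Fin m))) : Prop :=
  ∀ F ∈ Fac, ∀ G ∈ Fac, ∃ (t : ℕ) (c : ℕ → Finset (Fin n ⊕ Fin m)),
    c 0 = F ∧ c t = G ∧ (∀ i ≤ t, c i ∈ Fac) ∧
    ∀ i < t, (c i ∩ c (i + 1)).card + 1 = (c i).card

lemma xcard_eq_toLeft {n m : ℕ} (F : Finset (Fin n ⊕ Fin m)) : xcard F = F.toLeft.card := by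
  classical
  rw [xcard]
  have : F.filter (fun v => v.isLeft) = F.toLeft.map ⟨Sum.inl, Sum.inl_injective⟩ := by
    ext (x | x) <;> simp
  rw [this, Finset.card_map]

lemma ycard_eq_toRight {n m : ℕ} (F : Finset (Fin n ⊕ Fin m)) : ycard F = F.toRight.card := by
  classical
  rw [ycard]
  have : F.filter (fun v => v.isRight) = F.toRight.map ⟨Sum.inr, Sum.inr_injective⟩ := by
    ext (x | x) <;> simp
  rw [this, Finset.card_map]

lemma xcard_add_ycard {n m : ℕ} (F : Finset (Fin n ⊕ Fin m)) :
    xcard F + ycard F = F.card := by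
  rw [xcard_eq_toLeft, ycard_eq_toRight]
  exact Finset.card_toLeft_add_card_toRight

lemma xcard_mono {n m : ℕ} {S T : Finset (Fin n ⊕ Fin m)} (h : S ⊆ T) :
    xcard S ≤ xcard T := by
  rw [xcard_eq_toLeft, xcard_eq_toLeft]
  exact Finset.card_le_card (Finset.toLeft_subset_toLeft h)

lemma xcard_le_of_subset {n m : ℕ} {S T : Finset (Fin n ⊕ Fin m)} (h : S ⊆ T) :
    xcard T ≤ xcard S + (T.card - S.card) := by
  classical
  rw [xcard_eq_toLeft, xcard_eq_toLeft]
  have h1 : T.toLeft ⊆ S.toLeft ∪ (T \ S).toLeft := by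
    intro x hx
    simp only [Finset.mem_union, Finset.mem_toLeft, Finset.mem_sdiff] at *
    tauto
  calc T.toLeft.card ≤ (S.toLeft ∪ (T \ S).toLeft).card := Finset.card_le_card h1
    _ ≤ S.toLeft.card + (T \ S).toLeft.card := Finset.card_union_le _ _
    _ ≤ S.toLeft.card + (T \ S).card := Nat.add_le_add_left Finset.card_toLeft_le _
    _ = S.toLeft.card + (T.card - S.card) := by rw [Finset.card_sdiff_of_subset h]

/-- (Lemma 4.5(1).)  If `Δ^{[l-1]}` is strongly connected for every
`0 ≤ l ≤ dim Δ + 1` (note `dim Δ + 1 = max_k (q(k) + r(k))`), then for all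
`i = 1,…,s'-1` either `q(i) = q(i+1) - 1` or `r(i) = r(i+1) + 1`. -/
theorem step_of_skeleta_stronglyConnected (n m s' : ℕ) (hs' : 1 ≤ s')
    (qv rv : ℕ → ℕ)
    (hq : ∀ i j, 1 ≤ i → i < j → j ≤ s' → qv i < qv j)
    (hr : ∀ i j, 1 ≤ i → i < j → j ≤ s' → rv j < rv i)
    (hqn : qv s' ≤ n) (hrm : rv 1 ≤ m)
    (hconn : ∀ l, l ≤ (Finset.Icc 1 s').sup (fun k => qv k + rv k) →
      StronglyConnected (skelFacets n m s' qv rv l)) :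
    ∀ i, 1 ≤ i → i < s' → qv (i + 1) = qv i + 1 ∨ rv i = rv (i + 1) + 1 := by
  classical
  intro i hi1 his
  by_contra hcon
  push_neg at hcon
  obtain ⟨hq', hr'⟩ := hcon
  have hqi : qv i < qv (i + 1) := hq i (i + 1) hi1 (Nat.lt_succ_self i) his
  have hri : rv (i + 1) < rv i := hr i (i + 1) hi1 (Nat.lt_succ_self i) his
  have hq2 : qv i + 2 ≤ qv (i + 1) := by omega
  have hr2 : rv (i + 1) + 2 ≤ rv i := by omega
  set l := qv i + rv (i + 1) + 2 with hl
  have hle : l ≤ (Finset.Icc 1 s').sup (fun k => qv k + rv k) := by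
    have h : qv i + rv i ≤ (Finset.Icc 1 s').sup (fun k => qv k + rv k) :=
      Finset.le_sup (f := fun k => qv k + rv k) (Finset.mem_Icc.mpr ⟨hi1, his.le⟩)
    omega
  -- monotonicity helpers
  have hqmono : ∀ k, 1 ≤ k → k ≤ i → qv k ≤ qv i := by
    intro k hk1 hki
    rcases eq_or_lt_of_le hki with h | h
    · rw [h]
    · exact (hq k i hk1 h his.le).le
  have hrmono : ∀ k, i + 1 ≤ k → k ≤ s' → rv k ≤ rv (i + 1) := by
    intro k hk1 hks
    rcases eq_or_lt_of_le hk1 with h | h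
    · rw [← h]
    · exact (hr (i + 1) k (by omega) h hks).le
  -- cardinality bounds on n and m
  have hq1n : qv (i + 1) ≤ n := by
    rcases eq_or_lt_of_le (Nat.succ_le_of_lt his) with h | h
    · rw [show i + 1 = s' from h]; exact hqn
    · exact le_trans (hq (i + 1) s' (by omega) h le_rfl).le hqn
  have hrim : rv i ≤ m := by
    rcases eq_or_lt_of_le hi1 with h | h
    · rw [← h]; exact hrm
    · exact le_trans (hr 1 i le_rfl h (le_of_lt his)).le hrm
  -- construct the two facets F and G
  obtain ⟨A, -, hA⟩ := Finset.exists_subset_card_eq (s := (Finset.univ : Finset (Fin n))) (n := (qv i))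
    (by simp only [Finset.card_univ, Fintype.card_fin]; omega)
  obtain ⟨B, -, hB⟩ := Finset.exists_subset_card_eq (s := (Finset.univ : Finset (Fin m))) (n := (rv (i + 1) + 2))
    (by simp only [Finset.card_univ, Fintype.card_fin]; omega)
  obtain ⟨A', -, hA'⟩ := Finset.exists_subset_card_eq (s := (Finset.univ : Finset (Fin n))) (n := (qv i + 2))
    (by simp only [Finset.card_univ, Fintype.card_fin]; omega)
  obtain ⟨B', -, hB'⟩ := Finset.exists_subset_card_eq (s := (Finset.univ : Finset (Fin m))) (n := (rv (i + 1)))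
    (by simp only [Finset.card_univ, Fintype.card_fin]; omega)
  set F := A.disjSum B with hF
  set G := A'.disjSum B' with hG
  have hxF : xcard F = qv i := by
    rw [xcard_eq_toLeft, hF, Finset.toLeft_disjSum, hA]
  have hyF : ycard F = rv (i + 1) + 2 := by
    rw [ycard_eq_toRight, hF, Finset.toRight_disjSum, hB]
  have hxG : xcard G = qv i + 2 := by
    rw [xcard_eq_toLeft, hG, Finset.toLeft_disjSum, hA']
  have hyG : ycard G = rv (i + 1) := by
    rw [ycard_eq_toRight, hG, Finset.toRight_disjSum, hB']
  have hFmem : F ∈ skelFacets n m s' qv rv l := by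
    refine ⟨⟨i, hi1, his.le, ?_, ?_⟩, ?_⟩
    · rw [hxF]
    · rw [hyF]; exact hr2
    · rw [hF, Finset.card_disjSum, hA, hB]; omega
  have hGmem : G ∈ skelFacets n m s' qv rv l := by
    refine ⟨⟨i + 1, by omega, his, ?_, ?_⟩, ?_⟩
    · rw [hxG]; exact hq2
    · rw [hyG]
    · rw [hG, Finset.card_disjSum, hA', hB']; omega
  obtain ⟨t, c, hc0, hct, hmem, hadj⟩ := hconn l hle F hFmem G hGmem
  -- no facet of the skeleton has exactly qv i + 1 x-vertices
  have hno : ∀ H ∈ skelFacets n m s' qv rv l, xcard H ≠ qv i + 1 := by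
    rintro H ⟨⟨k, hk1, hks, hxk, hyk⟩, hcard⟩ hx
    have hsum := xcard_add_ycard H
    rcases le_or_gt k i with hki | hki
    · have := hqmono k hk1 hki; omega
    · have := hrmono k hki hks; omega
  -- along the chain, xcard increases by at most 1 at each step
  have hstep : ∀ j < t, xcard (c (j + 1)) ≤ xcard (c j) + 1 := by
    intro j hj
    have hadj' := hadj j hj
    have hcj : (c j).card = l := (hmem j hj.le).2
    have hcj1 : (c (j + 1)).card = l := (hmem (j + 1) hj).2
    have h1 : xcard (c (j + 1)) ≤ xcard (c j ∩ c (j + 1)) +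
        ((c (j + 1)).card - (c j ∩ c (j + 1)).card) :=
      xcard_le_of_subset Finset.inter_subset_right
    have h2 : xcard (c j ∩ c (j + 1)) ≤ xcard (c j) :=
      xcard_mono Finset.inter_subset_left
    omega
  -- discrete intermediate value argument
  have key : ∀ j, j ≤ t → xcard (c j) ≤ qv i := by
    intro j
    induction j with
    | zero => intro _; rw [hc0, hxF]
    | succ j ih =>
      intro hj
      have hj' : j < t := by omega
      have h1 := hstep j hj'
      have h2 := ih hj'.le
      have h3 := hno (c (j + 1)) (hmem (j + 1) hj)
      omega
  have := key t le_rfl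
  rw [hct, hxG] at this
  omega
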